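/- Let G be a finite connected graph with injective vertex function f. Then the merge tree M of (G,f) as defined by vertex set {L : L ∈ Δ(a), a ∈ ℝ} and edges between L₁ ∈ Δ(a) and L₂ ∈ Γ((-∞,a)) with L₂ ⊂ L₁, is acyclic and connected, i.e., a tree. -/

import Mathlib

variable {V : Type*}

/-- The connected component, within the induced subgraph of `G` on `S`, of a vertex
`v ∈ S`, viewed as a set of vertices of `G`. -/
def comp (G : SimpleGraph V) (S : Set V) (v : V) (hv : v ∈ S) : Set V :=
  {w | ∃ hw : w ∈ S, (G.induce S).Reachable ⟨v, hv⟩ ⟨w, hw⟩}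

/-- `μ(C)`: the vertices of `C` with no neighbor in `C` of smaller function value. -/
def mu (G : SimpleGraph V) (f : V → ℝ) (C : Set V) : Set V :=
  {v | v ∈ C ∧ ∀ w ∈ C, G.Adj v w → f v ≤ f w}

/-- `Γ(S)`: the identified components of the induced subgraph on `S`, each component `C`
recorded by its set of minima `μ(C)`. -/
def Gamma (G : SimpleGraph V) (f : V → ℝ) (S : Set V) : Set (Set V) :=
  {L | ∃ v, ∃ hv : v ∈ S, L = mu G f (comp G S v hv)}

/-- `Δ(a) = Γ(f⁻¹(-∞,a]) \ Γ(f⁻¹(-∞,a))`: the change in connectedness at level `a`. -/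
def Delta (G : SimpleGraph V) (f : V → ℝ) (a : ℝ) : Set (Set V) :=
  Gamma G f {v | f v ≤ a} \ Gamma G f {v | f v < a}

/-- The vertices of the merge tree: the sets `L` appearing in some `Δ(a)`. -/
def MergeVert (G : SimpleGraph V) (f : V → ℝ) : Type _ :=
  {L : Set V // ∃ a : ℝ, L ∈ Delta G f a}

/-- The (directed) edge relation of the merge tree: `L₁ ∈ Δ(a)`, `L₂ ∈ Γ(f⁻¹(-∞,a))`
and `L₂ ⊊ L₁`. -/
def mergeAdjAux (G : SimpleGraph V) (f : V → ℝ) (L₁ L₂ : Set V) : Prop :=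
  ∃ a : ℝ, L₁ ∈ Delta G f a ∧ L₂ ∈ Gamma G f {v | f v < a} ∧ L₂ ⊂ L₁

/-- The merge tree of `(G, f)` as a simple graph on the vertex set `MergeVert G f`. -/
def MergeGraph (G : SimpleGraph V) (f : V → ℝ) : SimpleGraph (MergeVert G f) where
  Adj L₁ L₂ := mergeAdjAux G f L₁.1 L₂.1 ∨ mergeAdjAux G f L₂.1 L₁.1
  symm := by
    constructor
    intro L₁ L₂ h
    exact h.symm
  loopless := by
    constructor
    rintro L (⟨a, _, _, h⟩ | ⟨a, _, _, h⟩) <;> exact (ssubset_irrefl _ h)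

section Aux

open SimpleGraph

variable (G : SimpleGraph V) (f : V → ℝ)

/-- The set of "good" vertices: minima of the component of their own sublevel set. -/
def goodSet : Set V :=
  {v | ∀ w ∈ comp G {x | f x ≤ f v} v (le_refl (f v)), f v ≤ f w}

/-- A set is downward closed w.r.t. `f`. -/
def DownClosed (S : Set V) : Prop := ∀ ⦃x y⦄, x ∈ S → f y ≤ f x → y ∈ S

lemma downClosed_le (a : ℝ) : DownClosed f {v | f v ≤ a} :=
  fun _ _ hx hy => le_trans hy hx

lemma downClosed_lt (a : ℝ) : DownClosed f {v | f v < a} :=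
  fun _ _ hx hy => lt_of_le_of_lt hy hx

lemma mem_comp_self (S : Set V) (v : V) (hv : v ∈ S) : v ∈ comp G S v hv :=
  ⟨hv, Reachable.refl _⟩

lemma comp_subset (S : Set V) (v : V) (hv : v ∈ S) : comp G S v hv ⊆ S :=
  fun _ hw => hw.1

lemma reachable_induce_mono {S T : Set V} (hST : S ⊆ T) {v w : V} (hv : v ∈ S) (hw : w ∈ S)
    (h : (G.induce S).Reachable ⟨v, hv⟩ ⟨w, hw⟩) :
    (G.induce T).Reachable ⟨v, hST hv⟩ ⟨w, hST hw⟩ := by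
  let hom : G.induce S →g G.induce T := ⟨fun x => ⟨x.1, hST x.2⟩, fun {a b} hab => hab⟩
  exact h.map hom

lemma comp_mono {S T : Set V} (hST : S ⊆ T) (v : V) (hv : v ∈ S) :
    comp G S v hv ⊆ comp G T v (hST hv) := by
  rintro w ⟨hw, hr⟩
  exact ⟨hST hw, reachable_induce_mono G hST hv hw hr⟩

lemma comp_eq_of_mem {S : Set V} {v w : V} (hv : v ∈ S) (hw : w ∈ S)
    (h : w ∈ comp G S v hv) : comp G S w hw = comp G S v hv := by
  obtain ⟨_, hr⟩ := h
  ext u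
  constructor
  · rintro ⟨hu, hr'⟩; exact ⟨hu, hr.trans hr'⟩
  · rintro ⟨hu, hr'⟩; exact ⟨hu, hr.symm.trans hr'⟩

lemma adj_mem_comp {S : Set V} {v u w : V} (hv : v ∈ S) (hw : w ∈ S)
    (hu : u ∈ comp G S v hv) (hadj : G.Adj u w) : w ∈ comp G S v hv := by
  obtain ⟨huS, hr⟩ := hu
  exact ⟨hw, hr.trans (SimpleGraph.Adj.reachable
    (show (G.induce S).Adj ⟨u, huS⟩ ⟨w, hw⟩ from hadj))⟩

lemma exists_adj_of_mem_comp {S : Set V} {v w : V} (hv : v ∈ S)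
    (hw : w ∈ comp G S v hv) (hne : w ≠ v) : ∃ u ∈ S, G.Adj v u := by
  obtain ⟨hwS, ⟨p⟩⟩ := hw
  cases p with
  | nil => exact absurd rfl hne
  | @cons _ b _ h q => exact ⟨b.1, b.2, h⟩

/-- The key local-to-global characterisation of `μ` of a component. -/
lemma mu_comp_eq (hf : Function.Injective f) {S : Set V} (hS : DownClosed f S)
    {v : V} (hv : v ∈ S) :
    mu G f (comp G S v hv) = comp G S v hv ∩ goodSet G f := by
  ext x
  constructor
  · rintro ⟨hx, hmin⟩
    refine ⟨hx, fun w hw => ?_⟩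
    by_contra hlt
    push_neg at hlt
    have hxS : x ∈ S := (comp_subset G S v hv) hx
    have hxw : w ≠ x := fun h => absurd (h ▸ le_refl (f x)) (not_le.2 (h ▸ hlt))
    obtain ⟨u, huS, hadj⟩ := exists_adj_of_mem_comp G (le_refl (f x)) hw hxw
    have huS' : u ∈ S := hS hxS huS
    have humem : u ∈ comp G S v hv := adj_mem_comp G hv huS' hx hadj
    have h1 : f x ≤ f u := hmin u humem hadj
    have h2 : u = x := hf (le_antisymm huS h1)
    exact G.loopless.irrefl x (h2 ▸ hadj)
  · rintro ⟨hx, hgood⟩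
    refine ⟨hx, fun w hw hadj => ?_⟩
    rcases le_total (f x) (f w) with h | h
    · exact h
    · have hxmem : x ∈ comp G {y | f y ≤ f x} x (le_refl (f x)) :=
        mem_comp_self G _ x (le_refl (f x))
      have : w ∈ comp G {y | f y ≤ f x} x (le_refl (f x)) :=
        adj_mem_comp G (le_refl (f x)) h hxmem hadj
      exact hgood w this

lemma gamma_mem_iff (hf : Function.Injective f) {S : Set V} (hS : DownClosed f S)
    {L : Set V} :
    L ∈ Gamma G f S ↔ ∃ v, ∃ hv : v ∈ S, L = comp G S v hv ∩ goodSet G f := by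
  constructor
  · rintro ⟨v, hv, rfl⟩
    exact ⟨v, hv, mu_comp_eq G f hf hS hv⟩
  · rintro ⟨v, hv, rfl⟩
    exact ⟨v, hv, (mu_comp_eq G f hf hS hv).symm⟩

lemma gamma_rep (hf : Function.Injective f) {S : Set V} (hS : DownClosed f S)
    {L : Set V} (hL : L ∈ Gamma G f S) {u : V} (hu : u ∈ L) :
    ∃ hu' : u ∈ S, L = comp G S u hu' ∩ goodSet G f := by
  obtain ⟨v, hv, rfl⟩ := (gamma_mem_iff G f hf hS).1 hL
  have humem : u ∈ comp G S v hv := hu.1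
  have huS : u ∈ S := (comp_subset G S v hv) humem
  exact ⟨huS, by rw [comp_eq_of_mem G hv huS humem]⟩

lemma exists_good_min [Fintype V] {S : Set V} (hS : DownClosed f S)
    {v : V} (hv : v ∈ S) :
    ∃ u, u ∈ comp G S v hv ∩ goodSet G f := by
  obtain ⟨u, hu, humin⟩ := Set.exists_min_image (comp G S v hv) f (Set.toFinite _)
    ⟨v, mem_comp_self G S v hv⟩
  have huS : u ∈ S := (comp_subset G S v hv) hu
  refine ⟨u, hu, fun w hw => ?_⟩
  have hsub : {x | f x ≤ f u} ⊆ S := fun y hy => hS huS hy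
  have : w ∈ comp G S u huS := comp_mono G hsub u (le_refl (f u)) hw
  rw [comp_eq_of_mem G hv huS hu] at this
  exact humin w this

lemma gamma_nonempty [Fintype V] (hf : Function.Injective f) {S : Set V}
    (hS : DownClosed f S) {L : Set V} (hL : L ∈ Gamma G f S) : L.Nonempty := by
  obtain ⟨v, hv, rfl⟩ := (gamma_mem_iff G f hf hS).1 hL
  exact exists_good_min G f hS hv

lemma gamma_subset_good (hf : Function.Injective f) {S : Set V}
    (hS : DownClosed f S) {L : Set V} (hL : L ∈ Gamma G f S) : L ⊆ goodSet G f := by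
  obtain ⟨v, hv, rfl⟩ := (gamma_mem_iff G f hf hS).1 hL
  exact Set.inter_subset_right

lemma gamma_empty : Gamma G f (∅ : Set V) = ∅ := by
  ext L
  simp [Gamma]

lemma sublevel_le_eq [Fintype V] {a : ℝ} (h : ∃ v : V, f v ≤ a) :
    ∃ b, (∃ v : V, f v = b) ∧ b ≤ a ∧ {v : V | f v ≤ a} = {v : V | f v ≤ b} := by
  classical
  obtain ⟨u, hu⟩ := h
  obtain ⟨w, hw, hwmax⟩ := (Finset.univ.filter (fun v : V => f v ≤ a)).exists_max_image f
    ⟨u, by simp [hu]⟩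
  have hwa : f w ≤ a := (Finset.mem_filter.1 hw).2
  refine ⟨f w, ⟨w, rfl⟩, hwa, ?_⟩
  ext x
  simp only [Set.mem_setOf_eq]
  exact ⟨fun hx => hwmax x (by simp [hx]), fun hx => hx.trans hwa⟩

lemma sublevel_lt_eq [Fintype V] {a : ℝ} :
    {v : V | f v < a} = (∅ : Set V) ∨
      ∃ b, (∃ v : V, f v = b) ∧ b < a ∧ {v : V | f v < a} = {v : V | f v ≤ b} := by
  classical
  by_cases h : ∃ v : V, f v < a
  · obtain ⟨u, hu⟩ := h
    obtain ⟨w, hw, hwmax⟩ := (Finset.univ.filter (fun v : V => f v < a)).exists_max_image f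
      ⟨u, by simp [hu]⟩
    have hwa : f w < a := (Finset.mem_filter.1 hw).2
    refine Or.inr ⟨f w, ⟨w, rfl⟩, hwa, ?_⟩
    ext x
    simp only [Set.mem_setOf_eq]
    exact ⟨fun hx => hwmax x (by simp [hx]), fun hx => lt_of_le_of_lt hx hwa⟩
  · left
    push_neg at h
    ext x
    simp only [Set.mem_setOf_eq, Set.mem_empty_iff_false, iff_false, not_lt]
    exact h x

/-- Every element of a `Γ` of a closed sublevel set is born at some level. -/
lemma exists_delta [Fintype V] (hf : Function.Injective f) {L : Set V} {a : ℝ}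
    (hL : L ∈ Gamma G f {v | f v ≤ a}) : ∃ b : ℝ, L ∈ Delta G f b := by
  classical
  obtain ⟨u, hu⟩ := gamma_nonempty G f hf (downClosed_le f a) hL
  obtain ⟨huS, -⟩ := gamma_rep G f hf (downClosed_le f a) hL hu
  set R := Finset.univ.image f with hR
  set F := R.filter (fun r => L ∈ Gamma G f {v | f v ≤ r}) with hF
  have hFne : F.Nonempty := by
    obtain ⟨b, ⟨w, hwb⟩, -, hset⟩ := sublevel_le_eq f ⟨u, huS⟩
    refine ⟨b, Finset.mem_filter.2 ⟨?_, by rw [← hset]; exact hL⟩⟩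
    rw [hR]
    exact Finset.mem_image.2 ⟨w, Finset.mem_univ w, hwb⟩
  refine ⟨F.min' hFne, (Finset.mem_filter.1 (F.min'_mem hFne)).2, fun hmem => ?_⟩
  rcases sublevel_lt_eq f (a := F.min' hFne) with hemp | ⟨b, ⟨w, hwb⟩, hblt, hset⟩
  · rw [hemp, gamma_empty] at hmem
    exact hmem
  · rw [hset] at hmem
    have hbF : b ∈ F := Finset.mem_filter.2
      ⟨by rw [hR]; exact Finset.mem_image.2 ⟨w, Finset.mem_univ w, hwb⟩, hmem⟩
    exact absurd (F.min'_le b hbF) (not_le.2 hblt)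

lemma reachable_induce_of_forall {S : Set V} (hS : ∀ x, x ∈ S) {v w : V}
    (h : G.Reachable v w) :
    (G.induce S).Reachable ⟨v, hS v⟩ ⟨w, hS w⟩ := by
  obtain ⟨p⟩ := h
  induction p with
  | nil => exact Reachable.refl _
  | @cons a b c h q ih =>
    exact (SimpleGraph.Adj.reachable
      (show (G.induce S).Adj ⟨a, hS a⟩ ⟨b, hS b⟩ from h)).trans ih

/-- At the top level, the only element of `Γ` is `goodSet`. -/
lemma gamma_top [Fintype V] (hG : G.Connected) (hf : Function.Injective f) {amax : ℝ}
    (hmax : ∀ v : V, f v ≤ amax) :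
    Gamma G f {v | f v ≤ amax} = {goodSet G f} := by
  have hcomp : ∀ (v : V) (hv : v ∈ {x | f x ≤ amax}),
      comp G {x | f x ≤ amax} v hv = Set.univ := by
    intro v hv
    ext w
    simp only [Set.mem_univ, iff_true]
    exact ⟨hmax w, reachable_induce_of_forall G (fun x => hmax x) (hG.preconnected v w)⟩
  ext L
  simp only [Set.mem_singleton_iff]
  rw [gamma_mem_iff G f hf (downClosed_le f amax)]
  constructor
  · rintro ⟨v, hv, rfl⟩
    rw [hcomp v hv, Set.univ_inter]
  · rintro rfl
    have hne : Nonempty V := hG.nonempty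
    obtain ⟨v⟩ := hne
    exact ⟨v, hmax v, by rw [hcomp v (hmax v), Set.univ_inter]⟩

/-- Every non-root merge vertex has a parent, to which it is adjacent. -/
lemma exists_parent [Fintype V] (hG : G.Connected) (hf : Function.Injective f)
    {L : Set V} {a : ℝ} (hL : L ∈ Gamma G f {v | f v ≤ a}) (hne : L ≠ goodSet G f) :
    ∃ L' : Set V, (∃ d, L' ∈ Delta G f d) ∧ mergeAdjAux G f L' L := by
  classical
  have hVne : Nonempty V := hG.nonempty
  set R := Finset.univ.image f with hR
  have hRne : R.Nonempty := ⟨f (Classical.arbitrary V),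
    Finset.mem_image.2 ⟨Classical.arbitrary V, Finset.mem_univ _, rfl⟩⟩
  set amax := R.max' hRne with hamax
  have hmax : ∀ v : V, f v ≤ amax :=
    fun v => R.le_max' (f v) (Finset.mem_image.2 ⟨v, Finset.mem_univ v, rfl⟩)
  set F := R.filter (fun r => L ∈ Gamma G f {v | f v ≤ r}) with hF
  obtain ⟨u, hu⟩ := gamma_nonempty G f hf (downClosed_le f a) hL
  obtain ⟨huS, -⟩ := gamma_rep G f hf (downClosed_le f a) hL hu
  have hFne : F.Nonempty := by
    obtain ⟨b, ⟨w, hwb⟩, -, hset⟩ := sublevel_le_eq f ⟨u, huS⟩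
    refine ⟨b, Finset.mem_filter.2 ⟨?_, by rw [← hset]; exact hL⟩⟩
    rw [hR]
    exact Finset.mem_image.2 ⟨w, Finset.mem_univ w, hwb⟩
  set b₀ := F.max' hFne with hb₀
  have hb₀F : b₀ ∈ F := F.max'_mem hFne
  have hb₀R : b₀ ∈ R := (Finset.mem_filter.1 hb₀F).1
  have hLb₀ : L ∈ Gamma G f {v | f v ≤ b₀} := (Finset.mem_filter.1 hb₀F).2
  have hamaxF : amax ∉ F := by
    intro hmem
    have : L ∈ Gamma G f {v | f v ≤ amax} := (Finset.mem_filter.1 hmem).2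
    rw [gamma_top G f hG hf hmax] at this
    exact hne this
  have hb₀lt : b₀ < amax := lt_of_le_of_ne (R.le_max' b₀ hb₀R)
    (fun h => hamaxF (h ▸ hb₀F))
  set D := R.filter (fun r => b₀ < r) with hD
  have hDne : D.Nonempty := ⟨amax, Finset.mem_filter.2 ⟨R.max'_mem hRne, hb₀lt⟩⟩
  set d := D.min' hDne with hd
  have hdD : d ∈ D := D.min'_mem hDne
  have hb₀d : b₀ < d := (Finset.mem_filter.1 hdD).2
  have hdR : d ∈ R := (Finset.mem_filter.1 hdD).1
  -- the strict sublevel set at `d` is the closed sublevel set at `b₀`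
  have hset : {v : V | f v < d} = {v : V | f v ≤ b₀} := by
    ext x
    simp only [Set.mem_setOf_eq]
    constructor
    · intro hx
      by_contra hxb
      push_neg at hxb
      have hxR : f x ∈ R := Finset.mem_image.2 ⟨x, Finset.mem_univ x, rfl⟩
      have : f x ∈ D := Finset.mem_filter.2 ⟨hxR, hxb⟩
      exact absurd (D.min'_le (f x) this) (not_le.2 hx)
    · intro hx
      exact lt_of_le_of_lt hx hb₀d
  have hLltd : L ∈ Gamma G f {v | f v < d} := by rw [hset]; exact hLb₀
  have hLled : L ∉ Gamma G f {v | f v ≤ d} := by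
    intro hmem
    have hdF : d ∈ F := Finset.mem_filter.2 ⟨hdR, hmem⟩
    exact absurd (F.le_max' d hdF) (not_le.2 hb₀d)
  -- pick the representative
  obtain ⟨hub₀, hLrep⟩ := gamma_rep G f hf (downClosed_lt f d) hLltd hu
  have hud : u ∈ {v : V | f v ≤ d} := le_of_lt (show f u < d from hub₀)
  set L' := comp G {v | f v ≤ d} u hud ∩ goodSet G f with hL'
  have hL'mem : L' ∈ Gamma G f {v | f v ≤ d} :=
    (gamma_mem_iff G f hf (downClosed_le f d)).2 ⟨u, hud, rfl⟩
  have hsub : L ⊆ L' := by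
    rw [hLrep, hL']
    exact Set.inter_subset_inter_left _
      (comp_mono G (fun x (hx : f x < d) => le_of_lt hx) u hub₀)
  have hLneL' : L ≠ L' := fun h => hLled (h ▸ hL'mem)
  have hssub : L ⊂ L' := ssubset_of_ne_of_subset hLneL' hsub
  have hL'Δ : L' ∈ Delta G f d := by
    refine ⟨hL'mem, fun hmem => ?_⟩
    have huL' : u ∈ L' := hsub hu
    obtain ⟨hu2, hrep2⟩ := gamma_rep G f hf (downClosed_lt f d) hmem huL'
    rw [← hLrep] at hrep2
    exact hLneL' hrep2.symm
  exact ⟨L', ⟨d, hL'Δ⟩, d, hL'Δ, hLltd, hssub⟩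

/-- Uniqueness of the parent. -/
lemma parent_unique_aux [Fintype V] (hf : Function.Injective f) {L L₁ L₂ : Set V}
    {a a' : ℝ} (hle : a ≤ a')
    (h₁Δ : L₁ ∈ Delta G f a) (h₁Γ : L ∈ Gamma G f {v | f v < a}) (h₁s : L ⊂ L₁)
    (h₂Δ : L₂ ∈ Delta G f a') (h₂Γ : L ∈ Gamma G f {v | f v < a'}) (h₂s : L ⊂ L₂) :
    L₁ = L₂ := by
  obtain ⟨u, hu⟩ := gamma_nonempty G f hf (downClosed_lt f a) h₁Γ
  obtain ⟨hua, -⟩ := gamma_rep G f hf (downClosed_lt f a) h₁Γ hu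
  have huL₁ : u ∈ L₁ := h₁s.1 hu
  have huL₂ : u ∈ L₂ := h₂s.1 hu
  obtain ⟨hu₁, hrep₁⟩ := gamma_rep G f hf (downClosed_le f a) h₁Δ.1 huL₁
  obtain ⟨hu₂, hrep₂⟩ := gamma_rep G f hf (downClosed_le f a') h₂Δ.1 huL₂
  rcases eq_or_lt_of_le hle with rfl | hlt
  · rw [hrep₁, hrep₂]
  · exfalso
    obtain ⟨hu', hrepL⟩ := gamma_rep G f hf (downClosed_lt f a') h₂Γ hu
    have hsub : L₁ ⊆ L := by
      rw [hrep₁, hrepL]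
      refine Set.inter_subset_inter_left _ (comp_mono G ?_ u hu₁)
      exact fun x (hx : f x ≤ a) => lt_of_le_of_lt hx hlt
    exact h₁s.2 hsub

lemma parent_unique [Fintype V] (hf : Function.Injective f) {L L₁ L₂ : Set V}
    (h₁ : mergeAdjAux G f L₁ L) (h₂ : mergeAdjAux G f L₂ L) : L₁ = L₂ := by
  obtain ⟨a, h₁Δ, h₁Γ, h₁s⟩ := h₁
  obtain ⟨a', h₂Δ, h₂Γ, h₂s⟩ := h₂
  rcases le_total a a' with hle | hle
  · exact parent_unique_aux G f hf hle h₁Δ h₁Γ h₁s h₂Δ h₂Γ h₂s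
  · exact (parent_unique_aux G f hf hle h₂Δ h₂Γ h₂s h₁Δ h₁Γ h₁s).symm

/-- A general acyclicity criterion: if every edge is oriented by a "parent" relation `P`
which strictly decreases a measure and parents are unique, the graph is acyclic. -/
lemma isAcyclic_of_parent {W : Type*} (H : SimpleGraph W) (m : W → ℕ)
    (P : W → W → Prop)
    (hP : ∀ {x y}, H.Adj x y → P x y ∨ P y x)
    (hm : ∀ {x y}, P x y → m y < m x)
    (huniq : ∀ {x y z}, P x z → P y z → x = y) :
    H.IsAcyclic := by
  classical
  have key : ∀ (u : W) (c : H.Walk u u), c.IsCycle →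
      (∀ y ∈ c.support, m u ≤ m y) → False := by
    intro u c hc hmin
    cases c with
    | nil => exact SimpleGraph.Walk.IsCycle.not_of_nil hc
    | @cons _ v₁ _ h₁ q =>
      obtain ⟨x, q', h', heq⟩ := SimpleGraph.Walk.exists_cons_eq_concat h₁ q
      have hv₁supp : v₁ ∈ (SimpleGraph.Walk.cons h₁ q).support := by
        rw [SimpleGraph.Walk.support_cons]
        exact List.mem_cons_of_mem _ q.start_mem_support
      have hedge : s(x, u) ∈ (SimpleGraph.Walk.cons h₁ q).edges := by
        rw [heq, SimpleGraph.Walk.edges_concat, List.concat_eq_append]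
        exact List.mem_append_right _ (List.mem_singleton.2 rfl)
      have hxsupp : x ∈ (SimpleGraph.Walk.cons h₁ q).support :=
        SimpleGraph.Walk.fst_mem_support_of_mem_edges _ hedge
      -- orientations
      have hPv₁ : P v₁ u := by
        rcases hP h₁ with h | h
        · exact absurd (hm h) (not_lt.2 (hmin v₁ hv₁supp))
        · exact h
      have hPx : P x u := by
        rcases hP h'.symm with h | h
        · exact absurd (hm h) (not_lt.2 (hmin x hxsupp))
        · exact h
      have hv₁x : v₁ = x := huniq hPv₁ hPx
      subst hv₁x
      -- derive a contradiction with edge-nodup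
      have hnodup : (SimpleGraph.Walk.cons h₁ q).edges.Nodup :=
        hc.isCircuit.isTrail.edges_nodup
      have heqe : s(u, v₁) :: q.edges = q'.edges ++ [s(u, v₁)] := by
        have h0 := congrArg SimpleGraph.Walk.edges heq
        rw [SimpleGraph.Walk.edges_cons, SimpleGraph.Walk.edges_concat,
          List.concat_eq_append, show s(v₁, u) = s(u, v₁) from Sym2.eq_swap] at h0
        exact h0
      have hlen : 2 ≤ q.length := by
        have h3 := hc.three_le_length
        simpa [SimpleGraph.Walk.length_cons] using h3
      rcases hq' : q'.edges with _ | ⟨y, t⟩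
      · rw [hq'] at heqe
        have hlq := congrArg List.length heqe
        rw [List.length_cons, List.nil_append, List.length_singleton,
          SimpleGraph.Walk.length_edges] at hlq
        omega
      · rw [hq'] at heqe
        have h2 : q.edges = t ++ [s(u, v₁)] := by
          have := heqe
          rw [List.cons_append] at this
          exact (List.cons.injEq _ _ _ _ ▸ this : _ ∧ _).2
        have hmem : s(u, v₁) ∈ q.edges := by
          rw [h2]
          exact List.mem_append_right _ (List.mem_singleton.2 rfl)
        rw [SimpleGraph.Walk.edges_cons] at hnodup
        exact (List.nodup_cons.1 hnodup).1 hmem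
  intro v c hc
  obtain ⟨u, humem, humin⟩ := Finset.exists_min_image c.support.toFinset m
    ⟨v, List.mem_toFinset.2 c.start_mem_support⟩
  have hu : u ∈ c.support := List.mem_toFinset.1 humem
  refine key u (c.rotate u hu) (hc.rotate hu) (fun y hy => ?_)
  have hy' : y ∈ c.support := by
    have h1 : (c.rotate u hu).support = u :: (c.rotate u hu).support.tail :=
      SimpleGraph.Walk.support_eq_cons _
    rw [h1] at hy
    rcases List.mem_cons.1 hy with rfl | hy2
    · exact hu
    · exact List.mem_of_mem_tail ((SimpleGraph.Walk.support_rotate c u hu).mem_iff.1 hy2)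
  exact humin y (List.mem_toFinset.2 hy')

end Aux

/-- For a finite connected graph with injective vertex function, the merge tree is
connected and acyclic, i.e. a tree. -/
theorem mergeGraph_is_tree [Fintype V] (G : SimpleGraph V) (f : V → ℝ)
    (hG : G.Connected) (hf : Function.Injective f) :
    (MergeGraph G f).Connected ∧ (MergeGraph G f).IsAcyclic := by
  classical
  have hVne : Nonempty V := hG.nonempty
  -- root
  set R := Finset.univ.image f with hR
  have hRne : R.Nonempty := ⟨f (Classical.arbitrary V),
    Finset.mem_image.2 ⟨Classical.arbitrary V, Finset.mem_univ _, rfl⟩⟩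
  set amax := R.max' hRne with hamax
  have hmax : ∀ v : V, f v ≤ amax :=
    fun v => R.le_max' (f v) (Finset.mem_image.2 ⟨v, Finset.mem_univ v, rfl⟩)
  have hroot_mem : goodSet G f ∈ Gamma G f {v | f v ≤ amax} := by
    rw [gamma_top G f hG hf hmax]
    rfl
  have hrootΔ : ∃ b : ℝ, goodSet G f ∈ Delta G f b := exists_delta G f hf hroot_mem
  let Root : MergeVert G f := ⟨goodSet G f, hrootΔ⟩
  -- every merge vertex is a subset of goodSet and lies in some Γ(≤ a)
  have hvert : ∀ X : MergeVert G f, ∃ a : ℝ, X.1 ∈ Gamma G f {v | f v ≤ a} := by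
    rintro ⟨L, a, hΔ⟩
    exact ⟨a, hΔ.1⟩
  have hsubgood : ∀ X : MergeVert G f, X.1 ⊆ goodSet G f := by
    intro X
    obtain ⟨a, hmem⟩ := hvert X
    exact gamma_subset_good G f hf (downClosed_le f a) hmem
  -- connectivity by strong induction on the "missing" cardinality
  have reach : ∀ (n : ℕ) (X : MergeVert G f), (goodSet G f \ X.1).ncard ≤ n →
      (MergeGraph G f).Reachable X Root := by
    intro n
    induction n with
    | zero =>
      intro X hX
      have h0 : (goodSet G f \ X.1).ncard = 0 := Nat.le_zero.1 hX
      have hempty : goodSet G f \ X.1 = ∅ :=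
        (Set.ncard_eq_zero (Set.toFinite _)).1 h0
      have hsub : goodSet G f ⊆ X.1 := by
        intro y hy
        by_contra hyX
        exact (Set.eq_empty_iff_forall_notMem.1 hempty) y ⟨hy, hyX⟩
      have h1 : X.1 = goodSet G f := Set.Subset.antisymm (hsubgood X) hsub
      have hXR : X = Root := Subtype.ext h1
      subst hXR
      exact SimpleGraph.Reachable.refl _
    | succ n ih =>
      intro X hX
      by_cases hXg : X.1 = goodSet G f
      · have hXR : X = Root := Subtype.ext hXg
        subst hXR
        exact SimpleGraph.Reachable.refl _
      · obtain ⟨a, hmem⟩ := hvert X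
        obtain ⟨L', ⟨d', hd'⟩, hadj⟩ := exists_parent G f hG hf hmem hXg
        let X' : MergeVert G f := ⟨L', d', hd'⟩
        have hAdj : (MergeGraph G f).Adj X X' := Or.inr hadj
        have hss : X.1 ⊂ L' := by
          obtain ⟨d, hΔ, hΓ, hs⟩ := hadj
          exact hs
        have hL'good : L' ⊆ goodSet G f := hsubgood X'
        have hmeas : (goodSet G f \ L').ncard < (goodSet G f \ X.1).ncard := by
          apply Set.ncard_lt_ncard _ (Set.toFinite _)
        
          constructor
          · exact fun y hy => ⟨hy.1, fun hyX => hy.2 (hss.1 hyX)⟩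
          · intro hcontra
            obtain ⟨z, hzL', hzX⟩ := Set.exists_of_ssubset hss
            have hz1 : z ∈ goodSet G f \ X.1 := ⟨hL'good hzL', hzX⟩
            have hz2 : z ∈ goodSet G f \ L' := hcontra hz1
            exact hz2.2 hzL'
        have : (goodSet G f \ L').ncard ≤ n := by omega
        exact (hAdj.reachable).trans (ih X' this)
  constructor
  · haveI : Nonempty (MergeVert G f) := ⟨Root⟩
    exact ⟨fun X Y => (reach _ X le_rfl).trans (reach _ Y le_rfl).symm⟩
  · refine isAcyclic_of_parent (MergeGraph G f) (fun X => X.1.ncard)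
      (fun X Y => mergeAdjAux G f X.1 Y.1) (fun {x y} h => h) ?_ ?_
    · rintro x y ⟨a, hΔ, hΓ, hs⟩
      exact Set.ncard_lt_ncard hs (Set.toFinite _)
    · intro x y z h₁ h₂
      exact Subtype.ext (parent_unique G f hf h₁ h₂)
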